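/- Let p be a prime not dividing n and q a power of p. For each partition λ of n, the number of monic degree-n polynomials f over F_q with vanishing coefficient of x^{n-1} whose irreducible factorization has degree multiset λ equals (1/q) times the number of all monic degree-n polynomials over F_q with degree multiset λ. -/

import Mathlib

open Polynomial

/-- The factorization type of a polynomial: the multiset of degrees of its monic
irreducible factors, with multiplicity. -/
noncomputable def factorType {F : Type*} [Field F] [DecidableEq F] (f : F[X]) : Multiset ℕ :=
  (UniqueFactorizationMonoid.normalizedFactors f).map Polynomial.natDegree

section aux

variable {F : Type*} [Field F] [DecidableEq F]

lemma monic_of_mem_normalizedFactors {f g : F[X]}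
    (hg : g ∈ UniqueFactorizationMonoid.normalizedFactors f) : g.Monic := by
  have h1 := UniqueFactorizationMonoid.irreducible_of_normalized_factor g hg
  have h2 := UniqueFactorizationMonoid.normalize_normalized_factor g hg
  have h3 := Polynomial.monic_normalize (p := g) h1.ne_zero
  rwa [h2] at h3

lemma natDegree_comp_X_add_C' (f : F[X]) (c : F) :
    (f.comp (X + C c)).natDegree = f.natDegree := by
  simp [natDegree_comp]

lemma factorType_comp_X_add_C {f : F[X]} (hf : f.Monic) (c : F) :
    factorType (f.comp (X + C c)) = factorType f := by
  classical
  set s := UniqueFactorizationMonoid.normalizedFactors f with hs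
  have hs_irr : ∀ g ∈ s, Irreducible g := fun g hg =>
    UniqueFactorizationMonoid.irreducible_of_normalized_factor g hg
  have hs_monic : ∀ g ∈ s, g.Monic := fun g hg => monic_of_mem_normalizedFactors hg
  have hprod : s.prod = f := by
    have hmp : s.prod.Monic := by
      have := monic_multiset_prod_of_monic s id (fun g hg => hs_monic g hg)
      simpa using this
    exact eq_of_monic_of_associated hmp hf
      (UniqueFactorizationMonoid.prod_normalizedFactors hf.ne_zero)
  set e : F[X] ≃ₐ[F] F[X] := algEquivAevalXAddC c with he
  have hecomp : ∀ g : F[X], e g = g.comp (X + C c) := by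
    intro g
    simp [he, algEquivAevalXAddC, algEquivOfCompEqX, comp_eq_aeval]
  have hkey : UniqueFactorizationMonoid.normalizedFactors (f.comp (X + C c)) =
      s.map (fun g => g.comp (X + C c)) := by
    have h1 : f.comp (X + C c) = (s.map (fun g => g.comp (X + C c))).prod := by
      conv_lhs => rw [← hprod]
      rw [← hecomp]
      rw [map_multiset_prod]
      congr 1
    rw [h1, UniqueFactorizationMonoid.normalizedFactors_prod_eq]
    · rw [Multiset.map_map]
      exact Multiset.map_congr rfl fun g hg =>
        ((hs_monic g hg).comp_X_add_C c).normalize_eq_self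
    · intro a ha
      obtain ⟨g, hg, rfl⟩ := Multiset.mem_map.mp ha
      rw [← hecomp]
      exact (MulEquiv.irreducible_iff (e : F[X] ≃* F[X])).mpr (hs_irr g hg)
  unfold factorType
  rw [hkey, Multiset.map_map]
  exact Multiset.map_congr rfl fun g _ => natDegree_comp_X_add_C' g c

lemma coeff_comp_X_add_C {f : F[X]} (hf : f.Monic) {n : ℕ} (hd : f.natDegree = n)
    (hn : 1 ≤ n) (c : F) :
    (f.comp (X + C c)).coeff (n - 1) = f.coeff (n - 1) + n * c := by
  rw [← taylor_apply, taylor_coeff]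
  have hdeg : (Polynomial.hasseDeriv (n - 1) f).natDegree < 2 := by
    have h := Polynomial.natDegree_hasseDeriv_le f (n - 1)
    omega
  rw [eval_eq_sum_range' hdeg, Finset.sum_range_succ, Finset.sum_range_one]
  rw [Polynomial.hasseDeriv_coeff, Polynomial.hasseDeriv_coeff]
  have h0 : 0 + (n - 1) = n - 1 := by omega
  have h1 : 1 + (n - 1) = n := by omega
  rw [h0, h1]
  have hch1 : ((n - 1).choose (n - 1) : F) = 1 := by simp
  have hch2 : (n.choose (n - 1) : F) = (n : F) := by
    have : n.choose (n - 1) = n := by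
      rw [Nat.choose_symm hn, Nat.choose_one_right]
    rw [this]
  have hcn : f.coeff n = 1 := by
    rw [← hd]; exact hf.coeff_natDegree
  rw [hch1, hch2, hcn]
  ring

lemma comp_X_add_C_comp_X_add_C (f : F[X]) (a b : F) :
    (f.comp (X + C a)).comp (X + C b) = f.comp (X + C (b + a)) := by
  rw [comp_assoc]
  congr 1
  simp [add_comp, C_add]
  ring

end aux

/-- If `p ∤ n`, then for each partition `λ` of `n`, the number of monic
degree-`n` polynomials over `F_q` with vanishing coefficient of `x^{n-1}` and
factorization type `λ` is `1/q` times the number of all monic degree-`n`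
polynomials over `F_q` with factorization type `λ`. -/
theorem card_trace_zero_by_type (F : Type*) [Field F] [DecidableEq F] [Fintype F]
    (p n q : ℕ) (hp : p.Prime) [CharP F p] (hpn : ¬ p ∣ n)
    (hq : Fintype.card F = q) (lam : Multiset ℕ) (hlam : lam.sum = n) :
    q * Nat.card {f : F[X] //
        f.Monic ∧ f.natDegree = n ∧ f.coeff (n - 1) = 0 ∧ factorType f = lam} =
      Nat.card {f : F[X] // f.Monic ∧ f.natDegree = n ∧ factorType f = lam} := by
  classical
  have hn0 : 1 ≤ n := by
    rcases Nat.eq_zero_or_pos n with h | h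
    · exact absurd (h ▸ dvd_zero p) hpn
    · exact h
  have hnF : (n : F) ≠ 0 := by
    rw [Ne, CharP.cast_eq_zero_iff F p]
    exact hpn
  -- the equivalence
  have E : {f : F[X] // f.Monic ∧ f.natDegree = n ∧ factorType f = lam} ≃
      F × {f : F[X] //
        f.Monic ∧ f.natDegree = n ∧ f.coeff (n - 1) = 0 ∧ factorType f = lam} := by
    refine
      { toFun := fun x =>
          ⟨x.1.coeff (n - 1) * (n : F)⁻¹,
           ⟨x.1.comp (X + C (-(x.1.coeff (n - 1) * (n : F)⁻¹))), ?_, ?_, ?_, ?_⟩⟩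
        invFun := fun x => ⟨x.2.1.comp (X + C x.1), ?_, ?_, ?_⟩
        left_inv := ?_
        right_inv := ?_ }
    · exact x.2.1.comp_X_add_C _
    · rw [natDegree_comp_X_add_C', x.2.2.1]
    · rw [coeff_comp_X_add_C x.2.1 x.2.2.1 hn0]
      field_simp
      ring
    · rw [factorType_comp_X_add_C x.2.1, x.2.2.2]
    · exact x.2.2.1.comp_X_add_C _
    · rw [natDegree_comp_X_add_C', x.2.2.2.1]
    · rw [factorType_comp_X_add_C x.2.2.1, x.2.2.2.2.2]
    · rintro ⟨f, hm, hd, ht⟩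
      ext : 1
      simp only [comp_X_add_C_comp_X_add_C]
      rw [show f.coeff (n - 1) * (n : F)⁻¹ + -(f.coeff (n - 1) * (n : F)⁻¹) = 0 by ring]
      simp
    · rintro ⟨c, g, hm, hd, hc, ht⟩
      have hcoeff : (g.comp (X + C c)).coeff (n - 1) = (n : F) * c := by
        rw [coeff_comp_X_add_C hm hd hn0, hc, zero_add]
      refine Prod.ext ?_ ?_
      · simp only [hcoeff]
        field_simp
      · ext : 1
        simp only [hcoeff, comp_X_add_C_comp_X_add_C]
        rw [show -((n : F) * c * (n : F)⁻¹) + c = 0 by field_simp; ring]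
        simp
  rw [Nat.card_congr E, Nat.card_prod, show Nat.card F = q by rw [Nat.card_eq_fintype_card, hq]]
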